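/- Let 𝔛 = (ℚ, τ) be the neighborhood frame on the rational numbers where τ(x) is the neighborhood filter of x in the standard (order) topology on ℚ. Then the bimodal logic of the product 2-frame 𝔛 × 𝔛 equals the fusion S4 ⊗ S4. -/

import Mathlib

set_option autoImplicit false

/-- Modal formulas with `n` modalities (propositional letters indexed by `ℕ`). -/
inductive MFormula (n : ℕ) : Type
  | prop : ℕ → MFormula n
  | bot  : MFormula n
  | imp  : MFormula n → MFormula n → MFormula n
  | box  : Fin n → MFormula n → MFormula n

namespace MFormula

/-- Negation as an abbreviation: ¬φ := φ → ⊥. -/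
def neg {n : ℕ} (φ : MFormula n) : MFormula n := φ.imp .bot

/-- Uniform substitution of formulas for propositional letters. -/
def subst {n : ℕ} (s : ℕ → MFormula n) : MFormula n → MFormula n
  | prop p  => s p
  | bot     => bot
  | imp φ ψ => imp (φ.subst s) (ψ.subst s)
  | box i φ => box i (φ.subst s)

end MFormula

/-- A classical tautology: true under every boolean valuation of formulas
(a valuation respecting `⊥` and `→`, arbitrary on letters and boxed formulas). -/
def IsTautology {n : ℕ} (φ : MFormula n) : Prop :=
  ∀ v : MFormula n → Prop,
    ¬ v .bot → (∀ ψ χ : MFormula n, v (ψ.imp χ) ↔ (v ψ → v χ)) → v φ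

/-- Normal modal logics with `n` modalities. -/
structure IsNormalLogic {n : ℕ} (L : Set (MFormula n)) : Prop where
  taut : ∀ φ : MFormula n, IsTautology φ → φ ∈ L
  kax : ∀ (i : Fin n) (p q : MFormula n),
    ((MFormula.box i (p.imp q)).imp ((MFormula.box i p).imp (MFormula.box i q))) ∈ L
  mp : ∀ φ ψ : MFormula n, φ.imp ψ ∈ L → φ ∈ L → ψ ∈ L
  subst : ∀ (φ : MFormula n) (s : ℕ → MFormula n), φ ∈ L → φ.subst s ∈ L
  nec : ∀ (i : Fin n) (φ : MFormula n), φ ∈ L → MFormula.box i φ ∈ L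

/-- The smallest normal logic containing `Γ`. -/
def NormalClosure {n : ℕ} (Γ : Set (MFormula n)) : Set (MFormula n) :=
  ⋂₀ {L : Set (MFormula n) | IsNormalLogic L ∧ Γ ⊆ L}

/-- The axiom □p → ¬□¬p. -/
def dAx : MFormula 1 :=
  (MFormula.box 0 (.prop 0)).imp (MFormula.neg (MFormula.box 0 (MFormula.neg (.prop 0))))

/-- The axiom □p → p. -/
def tAx : MFormula 1 := (MFormula.box 0 (.prop 0)).imp (.prop 0)

/-- The axiom □p → □□p. -/
def fourAx : MFormula 1 :=
  (MFormula.box 0 (.prop 0)).imp (MFormula.box 0 (MFormula.box 0 (.prop 0)))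

def LogicK : Set (MFormula 1) := NormalClosure ∅
def LogicD : Set (MFormula 1) := NormalClosure (LogicK ∪ {dAx})
def LogicT : Set (MFormula 1) := NormalClosure (LogicK ∪ {tAx})
def LogicD4 : Set (MFormula 1) := NormalClosure (LogicD ∪ {fourAx})
def LogicS4 : Set (MFormula 1) := NormalClosure (LogicT ∪ {fourAx})

/-- Translation of a unimodal formula into the bimodal language, replacing □ by □_i. -/
def trTo (i : Fin 2) : MFormula 1 → MFormula 2
  | .prop p  => .prop p
  | .bot     => .bot
  | .imp φ ψ => .imp (trTo i φ) (trTo i ψ)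
  | .box _ φ => .box i (trTo i φ)

/-- The fusion `L₁ ⊗ L₂` of two unimodal logics: the smallest bimodal normal logic
containing the translation of `L₁` (□ ↦ □₁) and of `L₂` (□ ↦ □₂). -/
def Fusion (L₁ L₂ : Set (MFormula 1)) : Set (MFormula 2) :=
  NormalClosure (trTo 0 '' L₁ ∪ trTo 1 '' L₂)

/-- Truth in a Kripke model. -/
def kSat {n : ℕ} {W : Type} (R : Fin n → W → W → Prop) (V : ℕ → Set W) :
    W → MFormula n → Prop
  | w, .prop p  => w ∈ V p
  | _, .bot     => False
  | w, .imp φ ψ => kSat R V w φ → kSat R V w ψ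
  | w, .box i φ => ∀ v : W, R i w v → kSat R V v φ

/-- The logic of a Kripke `n`-frame. -/
def KLogn {n : ℕ} {W : Type} [Nonempty W] (R : Fin n → W → W → Prop) :
    Set (MFormula n) :=
  {φ | ∀ (V : ℕ → Set W) (w : W), kSat R V w φ}

/-- The logic of a unimodal Kripke frame. -/
def KLog {W : Type} [Nonempty W] (R : W → W → Prop) : Set (MFormula 1) :=
  KLogn (fun _ => R)

/-- The logic of a bimodal Kripke frame. -/
def KLog2 {W : Type} [Nonempty W] (R₁ R₂ : W → W → Prop) : Set (MFormula 2) :=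
  KLogn ![R₁, R₂]

/-- Truth in a (monotone) neighborhood model: `x ⊨ □_i φ` iff the truth set of `φ`
belongs to the filter `τ i x`. -/
def nSat {n : ℕ} {X : Type} (τ : Fin n → X → Filter X) (V : ℕ → Set X) :
    X → MFormula n → Prop
  | x, .prop p  => x ∈ V p
  | _, .bot     => False
  | x, .imp φ ψ => nSat τ V x φ → nSat τ V x ψ
  | x, .box i φ => {y | nSat τ V y φ} ∈ τ i x

/-- The logic of a neighborhood `n`-frame. -/
def NLogn {n : ℕ} {X : Type} [Nonempty X] (τ : Fin n → X → Filter X) :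
    Set (MFormula n) :=
  {φ | ∀ (V : ℕ → Set X) (x : X), nSat τ V x φ}

/-- The logic of a unimodal neighborhood frame. -/
def NLog {X : Type} [Nonempty X] (τ : X → Filter X) : Set (MFormula 1) :=
  NLogn (fun _ => τ)

/-- The logic of a neighborhood 2-frame. -/
def NLog2 {X : Type} [Nonempty X] (τ₁ τ₂ : X → Filter X) : Set (MFormula 2) :=
  NLogn ![τ₁, τ₂]

/-- Validity of a unimodal formula in a neighborhood frame. -/
def NValid {X : Type} (τ : X → Filter X) (φ : MFormula 1) : Prop :=
  ∀ (V : ℕ → Set X) (x : X), nSat (fun _ => τ) V x φ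

/-- The neighborhood frame `N(F)` of a Kripke frame `F = (W, R)`:
`τ(w)` is the principal filter of `R(w)`. -/
def nOfK {W : Type} (R : W → W → Prop) (w : W) : Filter W :=
  Filter.principal {v | R w v}

/-- Bounded morphisms between neighborhood frames (with neighborhood functions
indexed by `ι`). -/
def IsNdMorphism {ι X Y : Type} (τ : ι → X → Filter X) (σ : ι → Y → Filter Y)
    (f : X → Y) : Prop :=
  Function.Surjective f ∧
    ∀ (i : ι) (x : X),
      (∀ U ∈ τ i x, f '' U ∈ σ i (f x)) ∧
      (∀ V ∈ σ i (f x), ∃ U ∈ τ i x, f '' U ⊆ V)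

/-- First neighborhood function of the product of two neighborhood frames:
`U ∈ τ'_1(x₁,x₂)` iff `∃ V ∈ τ₁ x₁, V × {x₂} ⊆ U`. -/
def prodTau1 {X₁ X₂ : Type} (τ₁ : X₁ → Filter X₁) (p : X₁ × X₂) :
    Filter (X₁ × X₂) :=
  (τ₁ p.1).map (fun x => (x, p.2))

/-- Second neighborhood function of the product of two neighborhood frames:
`U ∈ τ'_2(x₁,x₂)` iff `∃ V ∈ τ₂ x₂, {x₁} × V ⊆ U`. -/
def prodTau2 {X₁ X₂ : Type} (τ₂ : X₂ → Filter X₂) (p : X₁ × X₂) :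
    Filter (X₁ × X₂) :=
  (τ₂ p.2).map (fun y => (p.1, y))

/-- The successor relation on finite sequences: `a R b` iff `b = a·x` for some `x ∈ A`. -/
def sucRel (A : Type) (a b : List A) : Prop := ∃ x : A, b = a ++ [x]

/-- The four kinds of tree frames: irreflexive/reflexive, non-transitive/transitive. -/
inductive TreeKind : Type
  | inn  -- irreflexive non-transitive: F_in
  | rn   -- reflexive non-transitive: F_rn (reflexive closure)
  | itr  -- irreflexive transitive: F_it (transitive closure)
  | rt   -- reflexive transitive: F_rt (reflexive-transitive closure)

/-- The relation of the tree frame `F_{ξη}[A]` on `A*`. -/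
def treeRel (A : Type) : TreeKind → List A → List A → Prop
  | .inn => sucRel A
  | .rn  => fun a b => a = b ∨ sucRel A a b
  | .itr => Relation.TransGen (sucRel A)
  | .rt  => Relation.ReflTransGen (sucRel A)

/-- First relation of the product frame `F₁ ⊗ F₂` on `(A ⊔ B)*`:
`x R'_1 y` iff `y = x·z` for some `z ∈ A*` with `Λ R₁ z`. -/
def prodRel1 (A B : Type) (k : TreeKind) (x y : List (A ⊕ B)) : Prop :=
  ∃ z : List A, treeRel A k [] z ∧ y = x ++ z.map Sum.inl

/-- Second relation of the product frame `F₁ ⊗ F₂` on `(A ⊔ B)*`. -/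
def prodRel2 (A B : Type) (k : TreeKind) (x y : List (A ⊕ B)) : Prop :=
  ∃ z : List B, treeRel B k [] z ∧ y = x ++ z.map Sum.inr

/-- Pseudo-infinite sequences over `A ∪ {0}` (with `0` modelled by `none`, so
automatically `0 ∉ A`) that are eventually `0`. -/
def PSeq (A : Type) : Type :=
  {α : ℕ → Option A // ∃ N, ∀ k ≥ N, α k = none}

instance {A : Type} : Nonempty (PSeq A) := ⟨⟨fun _ => none, 0, fun _ _ => rfl⟩⟩

/-- `st(α)`: the least `N` such that `α` has only zeros from position `N` on. -/
noncomputable def PSeq.st {A : Type} (α : PSeq A) : ℕ :=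
  sInf {N | ∀ k ≥ N, α.1 k = none}

/-- `f_F(α)`: the finite sequence obtained from `α` by deleting all zeros. -/
noncomputable def PSeq.forget {A : Type} (α : PSeq A) : List A :=
  ((List.range α.st).map α.1).reduceOption

/-- The basic neighborhood `U_k(α)` of `α`, relative to the relation `R` on `A*`:
`{β ∈ X : α|_m = β|_m and f_F(α) R f_F(β)}` where `m = max(k, st(α))`. -/
def Unbhd {A : Type} (R : List A → List A → Prop) (k : ℕ) (α : PSeq A) :
    Set (PSeq A) :=
  {β | (∀ i < max k α.st, α.1 i = β.1 i) ∧ R α.forget β.forget}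

/-- The neighborhood function of `N_ω(F)`: `τ(α)` is the filter generated by the
base `{U_k(α) : k ∈ ℕ}`. -/
noncomputable def nOmega {A : Type} (R : List A → List A → Prop) (α : PSeq A) :
    Filter (PSeq A) :=
  ⨅ k : ℕ, Filter.principal (Unbhd R k α)

/-- The interleaving `x₁ y₁ x₂ y₂ …` of two pseudo-infinite sequences. -/
def interleave {A B : Type} (α : PSeq A) (β : PSeq B) : PSeq (A ⊕ B) :=
  ⟨fun n => if n % 2 = 0 then (α.1 (n / 2)).map Sum.inl
            else (β.1 (n / 2)).map Sum.inr, by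
    obtain ⟨N₁, h₁⟩ := α.2
    obtain ⟨N₂, h₂⟩ := β.2
    refine ⟨2 * max N₁ N₂, fun k hk => ?_⟩
    have hdiv : max N₁ N₂ ≤ k / 2 := by omega
    by_cases h : k % 2 = 0
    · simp [h, h₁ (k / 2) (le_trans (le_max_left _ _) hdiv)]
    · simp [h, h₂ (k / 2) (le_trans (le_max_right _ _) hdiv)]⟩

/-- The map `g`: delete all zeros from the interleaving of `α` and `β`. -/
noncomputable def gMap {A B : Type} (p : PSeq A × PSeq B) : List (A ⊕ B) :=
  (interleave p.1 p.2).forget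

----------------------------------------------------------------
-- Part 1 : generalities
----------------------------------------------------------------

section Part1
variable {n : ℕ}

theorem isNormal_univ : IsNormalLogic (Set.univ : Set (MFormula n)) := by
  constructor <;> intros <;> trivial

theorem isNormal_normalClosure (Γ : Set (MFormula n)) :
    IsNormalLogic (NormalClosure Γ) := by
  constructor
  · intro φ h
    exact fun L hL => hL.1.taut φ h
  · intro i p q L hL; exact hL.1.kax i p q
  · intro φ ψ h1 h2 L hL; exact hL.1.mp φ ψ (h1 L hL) (h2 L hL)
  · intro φ s h L hL; exact hL.1.subst φ s (h L hL)
  · intro i φ h L hL; exact hL.1.nec i φ (h L hL)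

theorem normalClosure_subset {Γ M : Set (MFormula n)} (hM : IsNormalLogic M)
    (hΓ : Γ ⊆ M) : NormalClosure Γ ⊆ M :=
  Set.sInter_subset_of_mem ⟨hM, hΓ⟩

theorem subset_normalClosure (Γ : Set (MFormula n)) : Γ ⊆ NormalClosure Γ :=
  fun φ hφ _L hL => hL.2 hφ

-- NLogn is a normal logic
variable {X : Type} [Nonempty X] {τ : Fin n → X → Filter X}

theorem nSat_subst (V : ℕ → Set X) (s : ℕ → MFormula n) (φ : MFormula n) (x : X) :
    nSat τ V x (φ.subst s) ↔ nSat τ (fun p => {y | nSat τ V y (s p)}) x φ := by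
  induction φ generalizing x with
  | prop p => simp [MFormula.subst, nSat]
  | bot => simp [MFormula.subst, nSat]
  | imp φ ψ ihφ ihψ => simp [MFormula.subst, nSat, ihφ, ihψ]
  | box i φ ih =>
      simp only [MFormula.subst, nSat]
      constructor
      · intro h; exact Filter.mem_of_superset h (fun y hy => (ih y).1 hy)
      · intro h; exact Filter.mem_of_superset h (fun y hy => (ih y).2 hy)

theorem isNormal_NLogn : IsNormalLogic (NLogn τ) := by
  constructor
  · intro φ h V x
    refine h (fun ψ => nSat τ V x ψ) (by simp [nSat]) (fun ψ χ => Iff.rfl)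
  · intro i p q V x
    simp only [NLogn, nSat, Set.mem_setOf_eq]
    intro h1 h2
    have := Filter.inter_mem h1 h2
    exact Filter.mem_of_superset this (fun y hy => hy.1 hy.2)
  · intro φ ψ h1 h2 V x
    exact h1 V x (h2 V x)
  · intro φ s h V x
    exact (nSat_subst V s φ x).2 (h _ x)
  · intro i φ h V x
    show {y | nSat τ V y φ} ∈ τ i x
    have : {y | nSat τ V y φ} = Set.univ := Set.eq_univ_of_forall (fun y => h V y)
    rw [this]; exact Filter.univ_mem

end Part1

----------------------------------------------------------------
-- Part 2 : soundness  (Fusion S4 S4 ⊆ NLog2 of the product over ℚ)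
----------------------------------------------------------------

section Part2

theorem S4_subset {M : Set (MFormula 1)} (hM : IsNormalLogic M)
    (ht : tAx ∈ M) (h4 : fourAx ∈ M) : LogicS4 ⊆ M := by
  have hK : LogicK ⊆ M := normalClosure_subset hM (by simp)
  have hT : LogicT ⊆ M := normalClosure_subset hM (by
    rintro φ (hφ | hφ)
    · exact hK hφ
    · simp only [Set.mem_singleton_iff] at hφ; subst hφ; exact ht)
  exact normalClosure_subset hM (by
    rintro φ (hφ | hφ)
    · exact hT hφ
    · simp only [Set.mem_singleton_iff] at hφ; subst hφ; exact h4)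

theorem S4_subset_NLog_rat : LogicS4 ⊆ NLog (fun x : ℚ => nhds x) := by
  refine S4_subset isNormal_NLogn ?_ ?_
  · intro V x
    simp only [NLog, nSat, tAx]
    intro h
    exact mem_of_mem_nhds h
  · intro V x
    simp only [NLog, nSat, fourAx]
    intro h
    have : ∀ᶠ y in nhds x, ∀ᶠ z in nhds y, z ∈ V 0 :=
      eventually_eventually_nhds.2 h
    exact this

-- slice lemmas
variable {X₁ X₂ : Type} (τ₁ : X₁ → Filter X₁) (τ₂ : X₂ → Filter X₂)

theorem nSat_trTo0 (V : ℕ → Set (X₁ × X₂)) (y : X₂) (ψ : MFormula 1) :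
    ∀ x : X₁, nSat ![prodTau1 τ₁, prodTau2 τ₂] V (x, y) (trTo 0 ψ) ↔
      nSat (fun _ => τ₁) (fun p => {x' | (x', y) ∈ V p}) x ψ := by
  induction ψ with
  | prop p => intro x; simp [trTo, nSat]
  | bot => intro x; simp [trTo, nSat]
  | imp φ χ ihφ ihχ => intro x; simp [trTo, nSat, ihφ, ihχ]
  | box i φ ih =>
      intro x
      simp only [trTo, nSat, Matrix.cons_val_zero, prodTau1, Filter.mem_map]
      have : (fun x' : X₁ => (x', y)) ⁻¹' {q | nSat ![prodTau1 τ₁, prodTau2 τ₂] V q (trTo 0 φ)}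
          = {x' | nSat (fun _ => τ₁) (fun p => {x'' | (x'', y) ∈ V p}) x' φ} := by
        ext x'; exact ih x'
      rw [this]

theorem nSat_trTo1 (V : ℕ → Set (X₁ × X₂)) (x : X₁) (ψ : MFormula 1) :
    ∀ y : X₂, nSat ![prodTau1 τ₁, prodTau2 τ₂] V (x, y) (trTo 1 ψ) ↔
      nSat (fun _ => τ₂) (fun p => {y' | (x, y') ∈ V p}) y ψ := by
  induction ψ with
  | prop p => intro y; simp [trTo, nSat]
  | bot => intro y; simp [trTo, nSat]
  | imp φ χ ihφ ihχ => intro y; simp [trTo, nSat, ihφ, ihχ]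
  | box i φ ih =>
      intro y
      simp only [trTo, nSat, Matrix.cons_val_one, Matrix.head_cons, Matrix.cons_val_zero, prodTau2, Filter.mem_map]
      have : (fun y' : X₂ => (x, y')) ⁻¹' {q | nSat ![prodTau1 τ₁, prodTau2 τ₂] V q (trTo 1 φ)}
          = {y' | nSat (fun _ => τ₂) (fun p => {y'' | (x, y'') ∈ V p}) y' φ} := by
        ext y'; exact ih y'
      rw [this]

theorem fusion_subset_NLog2_rat :
    Fusion LogicS4 LogicS4 ⊆
      NLog2 (prodTau1 (fun x : ℚ => nhds x)) (prodTau2 (fun x : ℚ => nhds x)) := by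
  refine normalClosure_subset isNormal_NLogn ?_
  rintro φ (⟨ψ, hψ, rfl⟩ | ⟨ψ, hψ, rfl⟩)
  · intro V p
    obtain ⟨x, y⟩ := p
    exact (nSat_trTo0 _ _ V y ψ x).2 (S4_subset_NLog_rat hψ _ x)
  · intro V p
    obtain ⟨x, y⟩ := p
    exact (nSat_trTo1 _ _ V x ψ y).2 (S4_subset_NLog_rat hψ _ y)

end Part2

----------------------------------------------------------------
-- Part 3 : syntactic machinery (derivations, Lindenbaum, MCS)
----------------------------------------------------------------

section Part3
variable {m : ℕ}

/-- encoding of formulas into ℕ -/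
def fenc : MFormula m → ℕ
  | .prop p => Nat.pair 0 p
  | .bot => Nat.pair 1 0
  | .imp φ ψ => Nat.pair 2 (Nat.pair (fenc φ) (fenc ψ))
  | .box i φ => Nat.pair 3 (Nat.pair i (fenc φ))

theorem fenc_injective : Function.Injective (fenc (m := m)) := by
  intro φ
  induction φ with
  | prop p => intro ψ h; cases ψ <;> simp [fenc, Nat.pair_eq_pair] at h <;> simp [h]
  | bot => intro ψ h; cases ψ <;> first | rfl | simp [fenc, Nat.pair_eq_pair] at h
  | imp φ₁ φ₂ ih₁ ih₂ =>
      intro ψ h; cases ψ <;> simp [fenc, Nat.pair_eq_pair] at h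
      rw [ih₁ h.1, ih₂ h.2]
  | box i φ ih =>
      intro ψ h; cases ψ <;> simp [fenc, Nat.pair_eq_pair] at h
      rw [ih h.2]
      congr 1
      exact Fin.ext h.1

instance : Countable (MFormula m) := fenc_injective.countable
instance : Nonempty (MFormula m) := ⟨.bot⟩

theorem vfold (v : MFormula m → Prop) (hi : ∀ ψ χ : MFormula m, v (ψ.imp χ) ↔ (v ψ → v χ)) :
    ∀ (l : List (MFormula m)) (χ : MFormula m),
      v (l.foldr .imp χ) ↔ ((∀ ψ ∈ l, v ψ) → v χ) := by
  intro l
  induction l with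
  | nil => intro χ; simp
  | cons a l ih => intro χ; simp only [List.foldr_cons, hi, ih, List.forall_mem_cons]; tauto

variable {L : Set (MFormula m)} (hL : IsNormalLogic L)
include hL

/-- derivability from a set of hypotheses over the logic `L` -/
def Deriv (L : Set (MFormula m)) (Γ : Set (MFormula m)) (χ : MFormula m) : Prop :=
  ∃ l : List (MFormula m), (∀ ψ ∈ l, ψ ∈ Γ) ∧ l.foldr .imp χ ∈ L

omit hL in
theorem deriv_mono {Γ Γ' : Set (MFormula m)} (h : Γ ⊆ Γ') {χ : MFormula m}
    (hd : Deriv L Γ χ) : Deriv L Γ' χ := by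
  obtain ⟨l, hl, hf⟩ := hd
  exact ⟨l, fun ψ hψ => h (hl ψ hψ), hf⟩

theorem deriv_of_mem {Γ : Set (MFormula m)} {χ : MFormula m} (h : χ ∈ Γ) : Deriv L Γ χ :=
  ⟨[χ], by simpa using h, hL.taut _ (by intro v hb hi; simp [hi])⟩

omit hL in
theorem deriv_of_L {Γ : Set (MFormula m)} {χ : MFormula m} (h : χ ∈ L) : Deriv L Γ χ :=
  ⟨[], by simp, by simpa using h⟩

theorem deriv_mp {Γ : Set (MFormula m)} {a b : MFormula m}
    (h1 : Deriv L Γ (a.imp b)) (h2 : Deriv L Γ a) : Deriv L Γ b := by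
  obtain ⟨l1, hl1, hf1⟩ := h1
  obtain ⟨l2, hl2, hf2⟩ := h2
  refine ⟨l1 ++ l2, ?_, ?_⟩
  · intro ψ hψ; rcases List.mem_append.1 hψ with h | h
    · exact hl1 ψ h
    · exact hl2 ψ h
  · have htaut : (l1.foldr .imp (a.imp b)).imp ((l2.foldr .imp a).imp
        ((l1 ++ l2).foldr .imp b)) ∈ L := by
      refine hL.taut _ ?_
      intro v hb hi
      simp only [hi, vfold v hi, List.forall_mem_append]
      tauto
    exact hL.mp _ _ (hL.mp _ _ htaut hf1) hf2

theorem deriv_deduction {Γ : Set (MFormula m)} {θ χ : MFormula m}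
    (h : Deriv L (insert θ Γ) χ) : Deriv L Γ (θ.imp χ) := by
  obtain ⟨l, hl, hf⟩ := h
  induction l generalizing χ with
  | nil =>
      refine ⟨[], by simp, ?_⟩
      simp only [List.foldr_nil] at hf ⊢
      have htaut : χ.imp (θ.imp χ) ∈ L :=
        hL.taut _ (by intro v hb hi; simp only [hi]; tauto)
      exact hL.mp _ _ htaut hf
  | cons a l ih =>
      simp only [List.foldr_cons] at hf
      have hswap : (l.foldr .imp (a.imp χ)) ∈ L := by
        have htaut : (MFormula.imp a (l.foldr .imp χ)).imp (l.foldr .imp (a.imp χ)) ∈ L := by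
          refine hL.taut _ ?_
          intro v hb hi
          simp only [hi, vfold v hi]
          tauto
        exact hL.mp _ _ htaut hf
      obtain ⟨l', hl', hf'⟩ := ih (fun ψ hψ => hl ψ (List.mem_cons_of_mem _ hψ)) hswap
      -- hf' : l'.foldr .imp (θ.imp (a.imp χ)) ∈ L
      rcases hl a List.mem_cons_self with ha | ha
      · -- a = θ : contraction
        subst ha
        refine ⟨l', hl', ?_⟩
        have htaut : (l'.foldr .imp (a.imp (a.imp χ))).imp (l'.foldr .imp (a.imp χ)) ∈ L := by
          refine hL.taut _ ?_
          intro v hb hi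
          simp only [hi, vfold v hi]
          tauto
        exact hL.mp _ _ htaut hf'
      · -- a ∈ Γ
        refine ⟨a :: l', ?_, ?_⟩
        · intro ψ hψ; rcases List.mem_cons.1 hψ with rfl | h
          · exact ha
          · exact hl' ψ h
        · have htaut : (l'.foldr .imp (θ.imp (a.imp χ))).imp
              ((a :: l').foldr .imp (θ.imp χ)) ∈ L := by
            refine hL.taut _ ?_
            intro v hb hi
            simp only [hi, vfold v hi, List.forall_mem_cons]
            tauto
          exact hL.mp _ _ htaut hf'

def LConsistent (L Γ : Set (MFormula m)) : Prop := ¬ Deriv L Γ .bot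

omit hL in
theorem consistent_mono {Γ Γ' : Set (MFormula m)} (h : Γ ⊆ Γ')
    (hc : LConsistent L Γ') : LConsistent L Γ := fun hd => hc (deriv_mono h hd)

def IsMCS (L Γ : Set (MFormula m)) : Prop :=
  LConsistent L Γ ∧ ∀ φ, LConsistent L (insert φ Γ) → φ ∈ Γ

omit hL in
theorem lindenbaum {S : Set (MFormula m)} (hS : LConsistent L S) :
    ∃ Γ, S ⊆ Γ ∧ IsMCS L Γ := by
  obtain ⟨e, he⟩ := exists_surjective_nat (MFormula m)
  classical
  let T : ℕ → Set (MFormula m) := fun k => Nat.rec S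
    (fun k Tk => if LConsistent L (insert (e k) Tk) then insert (e k) Tk else Tk) k
  have hTsucc : ∀ k, T (k+1) =
      if LConsistent L (insert (e k) (T k)) then insert (e k) (T k) else T k := fun k => rfl
  have hmono : ∀ k j, k ≤ j → T k ⊆ T j := by
    intro k j hkj
    induction j with
    | zero => simp_all
    | succ j ih =>
        rcases Nat.lt_or_ge k (j+1) with h | h
        · have h2 : T j ⊆ T (j+1) := by
            rw [hTsucc j]; split
            · exact Set.subset_insert _ _
            · exact subset_rfl
          exact (ih (Nat.lt_succ_iff.1 h)).trans h2
        · have : k = j + 1 := le_antisymm hkj h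
          subst this; exact subset_rfl
  have hcons : ∀ k, LConsistent L (T k) := by
    intro k
    induction k with
    | zero => exact hS
    | succ k ih =>
        rw [hTsucc k]; split
        · assumption
        · exact ih
  refine ⟨⋃ k, T k, ?_, ?_, ?_⟩
  · exact Set.subset_iUnion T 0
  · -- consistency of the union
    rintro ⟨l, hl, hf⟩
    have : ∃ k, ∀ ψ ∈ l, ψ ∈ T k := by
      clear hf
      induction l with
      | nil => exact ⟨0, by simp⟩
      | cons a l ih =>
          obtain ⟨k, hk⟩ := ih (fun ψ hψ => hl ψ (List.mem_cons_of_mem _ hψ))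
          obtain ⟨ka, hka⟩ := Set.mem_iUnion.1 (hl a List.mem_cons_self)
          refine ⟨max k ka, ?_⟩
          intro ψ hψ
          rcases List.mem_cons.1 hψ with rfl | h
          · exact hmono ka _ (le_max_right _ _) hka
          · exact hmono k _ (le_max_left _ _) (hk ψ h)
    obtain ⟨k, hk⟩ := this
    exact hcons k ⟨l, hk, hf⟩
  · intro φ hφ
    obtain ⟨k, rfl⟩ := he φ
    have h1 : LConsistent L (insert (e k) (T k)) := by
      refine consistent_mono ?_ hφ
      exact Set.insert_subset_insert (Set.subset_iUnion T k)
    have : T (k+1) = insert (e k) (T k) := by rw [hTsucc k]; simp [h1]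
    refine Set.mem_iUnion.2 ⟨k+1, ?_⟩
    rw [this]; exact Set.mem_insert _ _

section MCSprops
variable {Γ : Set (MFormula m)} (hΓ : IsMCS L Γ)
include hΓ

theorem mcs_deriv {φ : MFormula m} (h : Deriv L Γ φ) : φ ∈ Γ := by
  refine hΓ.2 φ ?_
  intro hd
  have h2 := deriv_deduction hL hd
  exact hΓ.1 (deriv_mp hL h2 h)

theorem mcs_mem_L {φ : MFormula m} (h : φ ∈ L) : φ ∈ Γ :=
  mcs_deriv hL hΓ (deriv_of_L h)

theorem mcs_mp {φ ψ : MFormula m} (h1 : φ.imp ψ ∈ Γ) (h2 : φ ∈ Γ) : ψ ∈ Γ :=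
  mcs_deriv hL hΓ (deriv_mp hL (deriv_of_mem hL h1) (deriv_of_mem hL h2))

theorem mcs_bot_not_mem : MFormula.bot ∉ Γ := by
  intro h
  exact hΓ.1 (deriv_of_mem hL h)

theorem mcs_neg_mem {φ : MFormula m} (h : φ ∉ Γ) : φ.neg ∈ Γ := by
  refine hΓ.2 _ ?_
  intro hd
  have h2 := deriv_deduction hL hd
  have htaut : ((φ.neg).imp .bot).imp φ ∈ L := by
    refine hL.taut _ ?_
    intro v hb hi
    simp only [MFormula.neg, hi]
    tauto
  exact h (mcs_deriv hL hΓ (deriv_mp hL (deriv_of_L htaut) h2))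

theorem mcs_imp_iff {φ ψ : MFormula m} : φ.imp ψ ∈ Γ ↔ (φ ∈ Γ → ψ ∈ Γ) := by
  constructor
  · intro h hφ; exact mcs_mp hL hΓ h hφ
  · intro h
    by_cases hφ : φ ∈ Γ
    · have hψ := h hφ
      have htaut : ψ.imp (φ.imp ψ) ∈ L :=
        hL.taut _ (by intro v hb hi; simp only [hi]; tauto)
      exact mcs_mp hL hΓ (mcs_mem_L hL hΓ htaut) hψ
    · have hn := mcs_neg_mem hL hΓ hφ
      have htaut : (φ.neg).imp (φ.imp ψ) ∈ L := by
        refine hL.taut _ ?_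
        intro v hb hi
        simp only [MFormula.neg, hi]
        tauto
      exact mcs_mp hL hΓ (mcs_mem_L hL hΓ htaut) hn

theorem mcs_not_both {φ : MFormula m} (h : φ.neg ∈ Γ) : φ ∉ Γ := by
  intro hφ
  exact mcs_bot_not_mem hL hΓ (mcs_mp hL hΓ h hφ)

end MCSprops

/-- box distribution over implication chains -/
theorem box_fold (i : Fin m) :
    ∀ (l : List (MFormula m)) (ψ : MFormula m),
      (MFormula.box i (l.foldr .imp ψ)).imp ((l.map (MFormula.box i)).foldr .imp
        (MFormula.box i ψ)) ∈ L := by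
  intro l
  induction l with
  | nil =>
      intro ψ
      exact hL.taut _ (by intro v hb hi; simp only [List.foldr_nil, List.map_nil, hi]; tauto)
  | cons χ l ih =>
      intro ψ
      have hk := hL.kax i χ (l.foldr .imp ψ)
      have ih' := ih ψ
      have htaut : ((MFormula.box i (χ.imp (l.foldr .imp ψ))).imp
            ((MFormula.box i χ).imp (MFormula.box i (l.foldr .imp ψ)))).imp
          (((MFormula.box i (l.foldr .imp ψ)).imp
            ((l.map (MFormula.box i)).foldr .imp (MFormula.box i ψ))).imp
          ((MFormula.box i ((χ :: l).foldr .imp ψ)).imp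
            (((χ :: l).map (MFormula.box i)).foldr .imp (MFormula.box i ψ)))) ∈ L := by
        refine hL.taut _ ?_
        intro v hb hi
        simp only [List.foldr_cons, List.map_cons, hi]
        tauto
      exact hL.mp _ _ (hL.mp _ _ htaut hk) ih'

/-- the existence lemma -/
theorem existence {Γ : Set (MFormula m)} (hΓ : IsMCS L Γ) {i : Fin m} {ψ : MFormula m}
    (h : MFormula.box i ψ ∉ Γ) :
    ∃ Δ, IsMCS L Δ ∧ (∀ χ, MFormula.box i χ ∈ Γ → χ ∈ Δ) ∧ ψ ∉ Δ := by
  have hcons : LConsistent L (insert ψ.neg {χ | MFormula.box i χ ∈ Γ}) := by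
    intro hd
    have h2 := deriv_deduction hL hd
    have htaut : ((ψ.neg).imp .bot).imp ψ ∈ L := by
      refine hL.taut _ ?_
      intro v hb hi
      simp only [MFormula.neg, hi]
      tauto
    have h3 : Deriv L {χ | MFormula.box i χ ∈ Γ} ψ :=
      deriv_mp hL (deriv_of_L htaut) h2
    obtain ⟨l, hl, hf⟩ := h3
    have hnec := hL.nec i _ hf
    have hboxed := hL.mp _ _ (box_fold hL i l ψ) hnec
    have : MFormula.box i ψ ∈ Γ := by
      refine mcs_deriv hL hΓ ⟨l.map (MFormula.box i), ?_, hboxed⟩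
      intro φ hφ
      obtain ⟨χ, hχ, rfl⟩ := List.mem_map.1 hφ
      exact hl χ hχ
    exact h this
  obtain ⟨Δ, hsub, hΔ⟩ := lindenbaum hcons
  refine ⟨Δ, hΔ, ?_, ?_⟩
  · intro χ hχ
    exact hsub (Set.mem_insert_of_mem _ hχ)
  · exact mcs_not_both hL hΔ (hsub (Set.mem_insert _ _))

end Part3

----------------------------------------------------------------
-- Part 4 : the tree countermodel
----------------------------------------------------------------

namespace TreeSec

abbrev F2 := MFormula 2

def LF : Set F2 := Fusion LogicS4 LogicS4

theorem LF_normal : IsNormalLogic LF := isNormal_normalClosure _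

theorem tAx_mem_S4 : tAx ∈ LogicS4 :=
  subset_normalClosure _ (Or.inl (subset_normalClosure _ (Or.inr rfl)))

theorem fourAx_mem_S4 : fourAx ∈ LogicS4 := subset_normalClosure _ (Or.inr rfl)

theorem trTo_mem_LF {φ : MFormula 1} (h : φ ∈ LogicS4) (i : Fin 2) : trTo i φ ∈ LF := by
  fin_cases i
  · exact subset_normalClosure _ (Or.inl ⟨φ, h, rfl⟩)
  · exact subset_normalClosure _ (Or.inr ⟨φ, h, rfl⟩)

theorem T_inst (i : Fin 2) (χ : F2) : (MFormula.box i χ).imp χ ∈ LF := by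
  have h := LF_normal.subst _ (fun _ => χ) (trTo_mem_LF tAx_mem_S4 i)
  simpa [tAx, trTo, MFormula.subst] using h

theorem four_inst (i : Fin 2) (χ : F2) :
    (MFormula.box i χ).imp (MFormula.box i (MFormula.box i χ)) ∈ LF := by
  have h := LF_normal.subst _ (fun _ => χ) (trTo_mem_LF fourAx_mem_S4 i)
  simpa [fourAx, trTo, MFormula.subst] using h

def W : Type := {Γ : Set F2 // IsMCS LF Γ}

noncomputable def fenum : ℕ → F2 := (exists_surjective_nat F2).choose

theorem fenum_surj : Function.Surjective fenum := (exists_surjective_nat F2).choose_spec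

theorem mcs_box_step {Γ : W} {i : Fin 2} {ψ : F2} (h : MFormula.box i ψ ∉ Γ.1) :
    ∃ Δ : W, (∀ χ, MFormula.box i χ ∈ Γ.1 → χ ∈ Δ.1) ∧ ψ ∉ Δ.1 := by
  obtain ⟨Δ, hΔ, h1, h2⟩ := existence LF_normal Γ.2 h
  exact ⟨⟨Δ, hΔ⟩, h1, h2⟩

open Classical in
noncomputable def step : (ℕ ⊕ ℕ) → W → W
  | .inl n, Γ =>
      if h : MFormula.box 0 (fenum n) ∈ Γ.1 then Γ else (mcs_box_step h).choose
  | .inr n, Γ =>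
      if h : MFormula.box 1 (fenum n) ∈ Γ.1 then Γ else (mcs_box_step h).choose

/-- the modality index matching a letter -/
def idx : (ℕ ⊕ ℕ) → Fin 2
  | .inl _ => 0
  | .inr _ => 1

theorem step_rel (a : ℕ ⊕ ℕ) (Γ : W) (χ : F2) (h : MFormula.box (idx a) χ ∈ Γ.1) :
    χ ∈ (step a Γ).1 ∧ MFormula.box (idx a) χ ∈ (step a Γ).1 := by
  have hbb : MFormula.box (idx a) (MFormula.box (idx a) χ) ∈ Γ.1 :=
    mcs_mp LF_normal Γ.2 (mcs_mem_L LF_normal Γ.2 (four_inst (idx a) χ)) h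
  cases a with
  | inl n =>
      simp only [step, idx] at *
      split
      · exact ⟨mcs_mp LF_normal Γ.2 (mcs_mem_L LF_normal Γ.2 (T_inst 0 χ)) h, h⟩
      · rename_i hn
        exact ⟨(mcs_box_step hn).choose_spec.1 χ h,
          (mcs_box_step hn).choose_spec.1 _ hbb⟩
  | inr n =>
      simp only [step, idx] at *
      split
      · exact ⟨mcs_mp LF_normal Γ.2 (mcs_mem_L LF_normal Γ.2 (T_inst 1 χ)) h, h⟩
      · rename_i hn
        exact ⟨(mcs_box_step hn).choose_spec.1 χ h,
          (mcs_box_step hn).choose_spec.1 _ hbb⟩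

theorem step_refute0 {n : ℕ} {Γ : W} (h : MFormula.box 0 (fenum n) ∉ Γ.1) :
    fenum n ∉ (step (Sum.inl n) Γ).1 := by
  simp only [step]
  rw [dif_neg h]
  exact (mcs_box_step h).choose_spec.2

theorem step_refute1 {n : ℕ} {Γ : W} (h : MFormula.box 1 (fenum n) ∉ Γ.1) :
    fenum n ∉ (step (Sum.inr n) Γ).1 := by
  simp only [step]
  rw [dif_neg h]
  exact (mcs_box_step h).choose_spec.2

noncomputable def label (Γ₀ : W) (x : List (ℕ ⊕ ℕ)) : W :=
  x.foldl (fun Γ a => step a Γ) Γ₀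

theorem label_append_single (Γ₀ : W) (x : List (ℕ ⊕ ℕ)) (a : ℕ ⊕ ℕ) :
    label Γ₀ (x ++ [a]) = step a (label Γ₀ x) := by
  simp [label, List.foldl_append]

def R1 (x y : List (ℕ ⊕ ℕ)) : Prop := ∃ u : List ℕ, y = x ++ u.map Sum.inl
def R2 (x y : List (ℕ ⊕ ℕ)) : Prop := ∃ u : List ℕ, y = x ++ u.map Sum.inr

noncomputable def τT : Fin 2 → List (ℕ ⊕ ℕ) → Filter (List (ℕ ⊕ ℕ)) :=
  ![fun x => Filter.principal {y | R1 x y}, fun x => Filter.principal {y | R2 x y}]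

theorem box_persist (Γ₀ : W) (i : Fin 2) (f : ℕ → ℕ ⊕ ℕ) (hf : ∀ n, idx (f n) = i) :
    ∀ (u : List ℕ) (x : List (ℕ ⊕ ℕ)) (χ : F2),
      MFormula.box i χ ∈ (label Γ₀ x).1 →
      χ ∈ (label Γ₀ (x ++ u.map f)).1 ∧ MFormula.box i χ ∈ (label Γ₀ (x ++ u.map f)).1 := by
  intro u
  induction u with
  | nil =>
      intro x χ h
      have hT : χ ∈ (label Γ₀ x).1 := by
        cases' step_rel (f 0) (label Γ₀ x) χ (by rw [hf 0]; exact h) with h1 _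
        -- easier: use T axiom directly
        exact mcs_mp LF_normal (label Γ₀ x).2 (mcs_mem_L LF_normal (label Γ₀ x).2 (T_inst i χ)) h
      simpa using ⟨hT, h⟩
  | cons n u ih =>
      intro x χ h
      have h1 := step_rel (f n) (label Γ₀ x) χ (by rw [hf n]; exact h)
      have h2 : MFormula.box i χ ∈ (label Γ₀ (x ++ [f n])).1 := by
        rw [label_append_single]; rw [← hf n]; exact h1.2
      have := ih (x ++ [f n]) χ h2
      simpa [List.append_assoc] using this

theorem truth_lemma (Γ₀ : W) :
    ∀ (φ : F2) (x : List (ℕ ⊕ ℕ)),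
      nSat τT (fun p => {x | MFormula.prop p ∈ (label Γ₀ x).1}) x φ ↔ φ ∈ (label Γ₀ x).1 := by
  intro φ
  induction φ with
  | prop p => intro x; simp [nSat]
  | bot => intro x; simp [nSat, mcs_bot_not_mem LF_normal (label Γ₀ x).2]
  | imp φ ψ ihφ ihψ =>
      intro x
      simp [nSat, ihφ, ihψ, mcs_imp_iff LF_normal (label Γ₀ x).2]
  | box i φ ih =>
      intro x
      have h01 : i = 0 ∨ i = 1 := by revert i; decide
      rcases h01 with rfl | rfl
      · have hτ : τT 0 x = Filter.principal {y | R1 x y} := by simp [τT]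
        simp only [nSat, hτ, Filter.mem_principal]
        constructor
        · -- semantic → syntactic
          intro h
          by_contra hn
          obtain ⟨n, hen⟩ := fenum_surj φ
          have hR : (x ++ [Sum.inl n]) ∈ {y | R1 x y} := ⟨[n], rfl⟩
          have hy := h hR
          have hy2 := (ih (x ++ [Sum.inl n])).1 hy
          rw [label_append_single] at hy2
          have := step_refute0 (Γ := label Γ₀ x) (n := n) (by rw [hen]; exact hn)
          rw [hen] at this
          exact this hy2
        · intro h y hy
          obtain ⟨u, rfl⟩ := hy
          exact (ih _).2 (box_persist Γ₀ 0 Sum.inl (fun _ => rfl) u x φ h).1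
      · have hτ : τT 1 x = Filter.principal {y | R2 x y} := by simp [τT]
        simp only [nSat, hτ, Filter.mem_principal]
        constructor
        · intro h
          by_contra hn
          obtain ⟨n, hen⟩ := fenum_surj φ
          have hR : (x ++ [Sum.inr n]) ∈ {y | R2 x y} := ⟨[n], rfl⟩
          have hy := h hR
          have hy2 := (ih (x ++ [Sum.inr n])).1 hy
          rw [label_append_single] at hy2
          have := step_refute1 (Γ := label Γ₀ x) (n := n) (by rw [hen]; exact hn)
          rw [hen] at this
          exact this hy2
        · intro h y hy
          obtain ⟨u, rfl⟩ := hy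
          exact (ih _).2 (box_persist Γ₀ 1 Sum.inr (fun _ => rfl) u x φ h).1

theorem deriv_empty {χ : F2} (h : Deriv LF ∅ χ) : χ ∈ LF := by
  obtain ⟨l, hl, hf⟩ := h
  have : l = [] := by
    cases l with
    | nil => rfl
    | cons a l => exact absurd (hl a List.mem_cons_self) (Set.notMem_empty a)
  subst this
  simpa using hf

theorem refutation {φ : F2} (h : φ ∉ LF) :
    ∃ Γ₀ : W, ¬ nSat τT (fun p => {x | MFormula.prop p ∈ (label Γ₀ x).1}) [] φ := by
  have hcons : LConsistent LF {φ.neg} := by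
    intro hd
    rw [show ({φ.neg} : Set F2) = insert φ.neg ∅ by simp] at hd
    have h2 := deriv_deduction LF_normal hd
    have h3 := deriv_empty h2
    have htaut : ((φ.neg).imp .bot).imp φ ∈ LF := by
      refine LF_normal.taut _ ?_
      intro v hb hi
      simp only [MFormula.neg, hi]
      tauto
    exact h (LF_normal.mp _ _ htaut h3)
  obtain ⟨Γ, hsub, hΓ⟩ := lindenbaum hcons
  refine ⟨⟨Γ, hΓ⟩, ?_⟩
  intro hsat
  replace hsat := (truth_lemma ⟨Γ, hΓ⟩ φ []).1 hsat
  have hneg : φ.neg ∈ (label ⟨Γ, hΓ⟩ []).1 := hsub rfl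
  exact mcs_not_both LF_normal (label ⟨Γ, hΓ⟩ []).2 hneg hsat

end TreeSec
----------------------------------------------------------------
-- Part 5 : the order structure on PSeq ℕ and the homeomorphism with ℚ
----------------------------------------------------------------

namespace PartFive

theorem st_spec {A : Type} (α : PSeq A) : ∀ k ≥ α.st, α.1 k = none :=
  Nat.sInf_mem (α.2 : {N | ∀ k ≥ N, α.1 k = none}.Nonempty)

theorem st_le {A : Type} (α : PSeq A) {N : ℕ} (h : ∀ k ≥ N, α.1 k = none) : α.st ≤ N :=
  Nat.sInf_le h

def emap : Option ℕ → ℤ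
  | none => 0
  | some n => if n % 2 = 0 then (n : ℤ) + 1 else -((n : ℤ) + 1)

theorem emap_injective : Function.Injective emap := by
  intro a b h
  match a, b with
  | none, none => rfl
  | none, some n =>
      exfalso; simp only [emap] at h
      split at h <;> omega
  | some n, none =>
      exfalso; simp only [emap] at h
      split at h <;> omega
  | some n, some m =>
      have hnm : n = m := by
        simp only [emap] at h
        split at h <;> split at h <;> omega
      exact congrArg some hnm

abbrev P := PSeq ℕ

def toLexP (α : P) : Lex (ℕ → ℤ) := toLex (fun n => emap (α.1 n))

theorem toLexP_injective : Function.Injective toLexP := by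
  intro α β h
  have h2 : ∀ n, emap (α.1 n) = emap (β.1 n) := fun n => congrFun h n
  have h3 : α.1 = β.1 := funext fun n => emap_injective (h2 n)
  exact Subtype.ext h3

noncomputable instance : LinearOrder P := LinearOrder.lift' toLexP toLexP_injective

theorem P_lt_iff {a b : P} :
    a < b ↔ ∃ i, (∀ j, j < i → a.1 j = b.1 j) ∧ emap (a.1 i) < emap (b.1 i) := by
  have h1 : a < b ↔ Pi.Lex (· < ·) (fun {_} => (· < ·))
      (fun n => emap (a.1 n)) (fun n => emap (b.1 n)) := Iff.rfl
  rw [h1]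
  unfold Pi.Lex
  constructor
  · rintro ⟨i, h1, h2⟩
    exact ⟨i, fun j hj => emap_injective (h1 j hj), h2⟩
  · rintro ⟨i, h1, h2⟩
    exact ⟨i, fun j hj => congrArg emap (h1 j hj), h2⟩

theorem P_lt_of {a b : P} (i : ℕ) (hagree : ∀ j, j < i → a.1 j = b.1 j)
    (hlt : emap (a.1 i) < emap (b.1 i)) : a < b :=
  P_lt_iff.2 ⟨i, hagree, hlt⟩

/-- update a pseudo-infinite sequence at one position -/
def upd {A : Type} (α : PSeq A) (k : ℕ) (v : Option A) : PSeq A :=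
  ⟨Function.update α.1 k v, max α.st (k+1), fun j hj => by
    rw [Function.update_of_ne (by omega)]
    exact st_spec α j (by omega)⟩

theorem upd_apply {A : Type} (α : PSeq A) (k : ℕ) (v : Option A) (j : ℕ) :
    (upd α k v).1 j = if j = k then v else α.1 j := Function.update_apply α.1 k v j

theorem lt_upd_pos (α : P) {m : ℕ} (hm : α.st ≤ m) : α < upd α m (some 0) := by
  refine P_lt_of m (fun j hj => by rw [upd_apply, if_neg (by omega)]) ?_
  rw [upd_apply, if_pos rfl, st_spec α m hm]
  simp [emap]

theorem upd_neg_lt (α : P) {m : ℕ} (hm : α.st ≤ m) : upd α m (some 1) < α := by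
  refine P_lt_of m (fun j hj => by rw [upd_apply, if_neg (by omega)]) ?_
  rw [upd_apply, if_pos rfl, st_spec α m hm]
  simp [emap]

instance : DenselyOrdered P := by
  constructor
  intro a b hab
  obtain ⟨i, h1, h2⟩ := P_lt_iff.1 hab
  set m := max a.st (i+1) with hm
  refine ⟨upd a m (some 0), lt_upd_pos a (le_max_left _ _), ?_⟩
  refine P_lt_of i (fun j hj => ?_) ?_
  · rw [upd_apply, if_neg (by omega)]; exact h1 j hj
  · rw [upd_apply, if_neg (by omega)]; exact h2

instance : NoMaxOrder P := by
  constructor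
  intro a
  exact ⟨upd a a.st (some 0), lt_upd_pos a le_rfl⟩

instance : NoMinOrder P := by
  constructor
  intro a
  exact ⟨upd a a.st (some 1), upd_neg_lt a le_rfl⟩

theorem P_countable : Countable P := by
  have hinj : Function.Injective (fun α : P => (List.range (α.st + 1)).map α.1) := by
    intro α β h
    simp only at h
    have hlen : α.st = β.st := by
      have := congrArg List.length h
      simpa using this
    have hval : ∀ j, α.1 j = β.1 j := by
      intro j
      rcases Nat.lt_or_ge j (α.st + 1) with hj | hj
      · have h1 : ((List.range (α.st + 1)).map α.1)[j]? = some (α.1 j) := by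
          simp [List.getElem?_map, List.getElem?_range, hj]
        have h2 : ((List.range (β.st + 1)).map β.1)[j]? = some (β.1 j) := by
          simp [List.getElem?_map, List.getElem?_range, hlen ▸ hj]
        rw [h] at h1
        rw [h1] at h2
        exact Option.some_injective _ h2
      · rw [st_spec α j (by omega), st_spec β j (by omega)]
    exact Subtype.ext (funext hval)
  exact hinj.countable

instance : Countable P := P_countable

def cylSet (k : ℕ) (α : P) : Set P := {β | ∀ j, j < k → β.1 j = α.1 j}

def cylF (α : P) : Filter P := ⨅ k, Filter.principal (cylSet k α)

theorem cylF_basis (α : P) : (cylF α).HasBasis (fun _ => True) (fun k => cylSet k α) := by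
  refine Filter.hasBasis_iInf_principal ?_
  intro k1 k2
  refine ⟨max k1 k2, ?_, ?_⟩
  · intro β hβ j hj; exact hβ j (lt_of_lt_of_le hj (le_max_left _ _))
  · intro β hβ j hj; exact hβ j (lt_of_lt_of_le hj (le_max_right _ _))

theorem mem_cylF {α : P} {s : Set P} : s ∈ cylF α ↔ ∃ k, cylSet k α ⊆ s := by
  rw [(cylF_basis α).mem_iff]
  simp

theorem lt_of_agree {c x β : P} {i k : ℕ} (hcx : ∀ j, j < i → c.1 j = x.1 j)
    (hd : emap (c.1 i) < emap (x.1 i)) (hk : i < k) (hβ : β ∈ cylSet k x) : c < β := by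
  refine P_lt_of i (fun j hj => ?_) ?_
  · rw [hβ j (by omega)]
    exact hcx j hj
  · rw [hβ i hk]
    exact hd

theorem agree_lt {d x β : P} {i k : ℕ} (hxd : ∀ j, j < i → x.1 j = d.1 j)
    (hd : emap (x.1 i) < emap (d.1 i)) (hk : i < k) (hβ : β ∈ cylSet k x) : β < d := by
  refine P_lt_of i (fun j hj => ?_) ?_
  · rw [hβ j (by omega)]
    exact hxd j hj
  · rw [hβ i hk]
    exact hd

theorem Ioo_upd_subset_cyl {α β : P} {m k : ℕ} (hk : k ≤ m) (hm : α.st ≤ m)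
    (h1 : upd α m (some 1) < β) (h2 : β < upd α m (some 0)) : β ∈ cylSet k α := by
  by_contra hcon
  simp only [cylSet, Set.mem_setOf_eq, not_forall] at hcon
  obtain ⟨j0, hj0, hne⟩ := hcon
  classical
  have hex : ∃ j, β.1 j ≠ α.1 j := ⟨j0, hne⟩
  set i := Nat.find hex with hi
  have hiS : β.1 i ≠ α.1 i := Nat.find_spec hex
  have himin : ∀ j, j < i → β.1 j = α.1 j := by
    intro j hj
    by_contra hc
    exact Nat.find_min hex (hi ▸ hj) hc
  have hilt : i < m := by
    have : i ≤ j0 := Nat.find_le hne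
    omega
  -- analyze upd α m (some 1) < β
  obtain ⟨i₁, ha1, hl1⟩ := P_lt_iff.1 h1
  have hi₁ : i₁ = i := by
    rcases lt_trichotomy i₁ i with h | h | h
    · exfalso
      have hb : β.1 i₁ = α.1 i₁ := himin i₁ h
      have hc : (upd α m (some 1)).1 i₁ = α.1 i₁ := by
        rw [upd_apply, if_neg (by omega)]
      rw [hc, hb] at hl1
      omega
    · exact h
    · exfalso
      have := ha1 i (by omega)
      rw [upd_apply, if_neg (by omega)] at this
      exact hiS this.symm
  obtain ⟨i₂, ha2, hl2⟩ := P_lt_iff.1 h2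
  have hi₂ : i₂ = i := by
    rcases lt_trichotomy i₂ i with h | h | h
    · exfalso
      have hb : β.1 i₂ = α.1 i₂ := himin i₂ h
      have hc : (upd α m (some 0)).1 i₂ = α.1 i₂ := by
        rw [upd_apply, if_neg (by omega)]
      rw [hc, hb] at hl2
      omega
    · exact h
    · exfalso
      have := ha2 i (by omega)
      rw [upd_apply, if_neg (by omega)] at this
      exact hiS this
  subst hi₁; subst hi₂
  have e1 : (upd α m (some 1)).1 i = α.1 i := by rw [upd_apply, if_neg (by omega)]
  have e2 : (upd α m (some 0)).1 i = α.1 i := by rw [upd_apply, if_neg (by omega)]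
  rw [e1] at hl1
  rw [e2] at hl2
  omega

noncomputable def hIso : ℚ ≃o P := (Order.iso_of_countable_dense ℚ P).some

theorem map_hIso_nhds (x : ℚ) : Filter.map hIso (nhds x) = cylF (hIso x) := by
  apply Filter.ext
  intro s
  rw [((nhds_basis_Ioo x).map hIso).mem_iff, mem_cylF]
  constructor
  · rintro ⟨⟨b1, b2⟩, ⟨hb1, hb2⟩, hsub⟩
    obtain ⟨i₁, ha1, hl1⟩ := P_lt_iff.1 (hIso.lt_iff_lt.2 hb1 : hIso b1 < hIso x)
    obtain ⟨i₂, ha2, hl2⟩ := P_lt_iff.1 (hIso.lt_iff_lt.2 hb2 : hIso x < hIso b2)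
    refine ⟨max i₁ i₂ + 1, ?_⟩
    intro β hβ
    have hc : hIso b1 < β := lt_of_agree ha1 hl1 (by omega) hβ
    have hd : β < hIso b2 := agree_lt ha2 hl2 (by omega) hβ
    have : hIso.symm β ∈ Set.Ioo b1 b2 := by
      constructor
      · have := hIso.symm.lt_iff_lt.2 hc
        simpa using this
      · have := hIso.symm.lt_iff_lt.2 hd
        simpa using this
    have himg : β ∈ hIso '' Set.Ioo b1 b2 := ⟨hIso.symm β, this, by simp⟩
    exact hsub himg
  · rintro ⟨k, hsub⟩
    set m := max k (hIso x).st with hm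
    set c := upd (hIso x) m (some 1) with hc
    set d := upd (hIso x) m (some 0) with hd
    refine ⟨(hIso.symm c, hIso.symm d), ⟨?_, ?_⟩, ?_⟩
    · have h1 : c < hIso x := upd_neg_lt _ (le_max_right _ _)
      have := hIso.symm.lt_iff_lt.2 h1
      simpa using this
    · have h1 : hIso x < d := lt_upd_pos _ (le_max_right _ _)
      have := hIso.symm.lt_iff_lt.2 h1
      simpa using this
    · rintro β ⟨y, ⟨hy1, hy2⟩, rfl⟩
      refine hsub (Ioo_upd_subset_cyl (le_max_left _ _) (le_max_right _ _) ?_ ?_)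
      · have := hIso.lt_iff_lt.2 hy1
        simpa using this
      · have := hIso.lt_iff_lt.2 hy2
        simpa using this

end PartFive

----------------------------------------------------------------
-- Part 6 : the map gMap as a filter morphism
----------------------------------------------------------------

namespace PartSix
open PartFive

theorem forget_eq {A : Type} (α : PSeq A) {m : ℕ} (hm : α.st ≤ m) :
    α.forget = ((List.range m).map α.1).reduceOption := by
  induction m with
  | zero =>
      have h0 : α.st = 0 := Nat.le_zero.1 hm
      unfold PSeq.forget
      rw [h0]
  | succ m ih =>
      rcases Nat.lt_or_ge α.st (m+1) with h | h
      · rw [ih (by omega), List.range_succ, List.map_append, List.reduceOption_append]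
        have : α.1 m = none := st_spec α m (by omega)
        simp [this]
      · have : α.st = m + 1 := le_antisymm hm h
        unfold PSeq.forget
        rw [this]

theorem interleave_apply_even {A B : Type} (α : PSeq A) (β : PSeq B) (j : ℕ) :
    (interleave α β).1 (2*j) = (α.1 j).map Sum.inl := by
  have h1 : (2*j) % 2 = 0 := by omega
  have h2 : (2*j) / 2 = j := by omega
  simp only [interleave, h1, h2, reduceIte]

theorem interleave_apply_odd {A B : Type} (α : PSeq A) (β : PSeq B) (j : ℕ) :
    (interleave α β).1 (2*j+1) = (β.1 j).map Sum.inr := by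
  have h1 : (2*j+1) % 2 = 1 := by omega
  have h2 : (2*j+1) / 2 = j := by omega
  simp only [interleave, h1, h2]
  norm_num

theorem st_interleave_le {A B : Type} (α : PSeq A) (β : PSeq B) {m : ℕ}
    (h1 : α.st ≤ m) (h2 : β.st ≤ m) : (interleave α β).st ≤ 2*m := by
  refine st_le _ ?_
  intro k hk
  rcases Nat.even_or_odd k with ⟨j, hj⟩ | ⟨j, hj⟩
  · have : k = 2*j := by omega
    subst this
    rw [interleave_apply_even, st_spec α j (by omega)]
    rfl
  · have : k = 2*j+1 := by omega
    subst this
    rw [interleave_apply_odd, st_spec β j (by omega)]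
    rfl

theorem reduce_pair_inl {A B : Type} (x : Option A) :
    ([x.map Sum.inl, (none : Option (A ⊕ B))]).reduceOption = ([x].reduceOption).map Sum.inl := by
  cases x <;> simp [List.reduceOption]

theorem reduce_pair_inr {A B : Type} (x : Option B) :
    ([(none : Option (A ⊕ B)), x.map Sum.inr]).reduceOption = ([x].reduceOption).map Sum.inr := by
  cases x <;> simp [List.reduceOption]

theorem inter_slice1 {A B : Type} (α : PSeq A) (β : PSeq B) {s : ℕ} (hs : β.st ≤ s) :
    ∀ t : ℕ,
      ((List.range (2*t)).map (fun j => (interleave α β).1 (2*s + j))).reduceOption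
        = (((List.range t).map (fun j => α.1 (s + j))).reduceOption).map Sum.inl := by
  intro t
  induction t with
  | zero => simp
  | succ t ih =>
      have hr : List.range (2*(t+1)) = List.range (2*t) ++ [2*t, 2*t+1] := by
        have h1 : 2*(t+1) = (2*t+1) + 1 := by omega
        rw [h1, List.range_succ, List.range_succ]
        simp
      rw [hr, List.map_append, List.reduceOption_append, ih]
      have he : (interleave α β).1 (2*s + 2*t) = (α.1 (s+t)).map Sum.inl := by
        have : 2*s + 2*t = 2*(s+t) := by omega
        rw [this, interleave_apply_even]
      have ho : (interleave α β).1 (2*s + (2*t+1)) = none := by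
        have : 2*s + (2*t+1) = 2*(s+t)+1 := by omega
        rw [this, interleave_apply_odd, st_spec β (s+t) (by omega)]
        rfl
      rw [List.range_succ, List.map_append, List.reduceOption_append]
      simp only [List.map_cons, List.map_nil, he, ho]
      rw [reduce_pair_inl, ← List.map_append]

theorem inter_slice2 {A B : Type} (α : PSeq A) (β : PSeq B) {s : ℕ} (hs : α.st ≤ s) :
    ∀ t : ℕ,
      ((List.range (2*t)).map (fun j => (interleave α β).1 (2*s + j))).reduceOption
        = (((List.range t).map (fun j => β.1 (s + j))).reduceOption).map Sum.inr := by
  intro t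
  induction t with
  | zero => simp
  | succ t ih =>
      have hr : List.range (2*(t+1)) = List.range (2*t) ++ [2*t, 2*t+1] := by
        have h1 : 2*(t+1) = (2*t+1) + 1 := by omega
        rw [h1, List.range_succ, List.range_succ]
        simp
      rw [hr, List.map_append, List.reduceOption_append, ih]
      have he : (interleave α β).1 (2*s + 2*t) = none := by
        have : 2*s + 2*t = 2*(s+t) := by omega
        rw [this, interleave_apply_even, st_spec α (s+t) (by omega)]
        rfl
      have ho : (interleave α β).1 (2*s + (2*t+1)) = (β.1 (s+t)).map Sum.inr := by
        have : 2*s + (2*t+1) = 2*(s+t)+1 := by omega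
        rw [this, interleave_apply_odd]
      rw [List.range_succ, List.map_append, List.reduceOption_append]
      simp only [List.map_cons, List.map_nil, he, ho]
      rw [reduce_pair_inr, ← List.map_append]

theorem gMap_eq1 {A B : Type} (α : PSeq A) (β : PSeq B) {m n : ℕ}
    (hβ : β.st ≤ m) (hα : α.st ≤ n) (hmn : m ≤ n) :
    gMap (α, β) = ((List.range (2*m)).map (interleave α β).1).reduceOption
      ++ (((List.range (n - m)).map (fun j => α.1 (m + j))).reduceOption).map Sum.inl := by
  have hst : (interleave α β).st ≤ 2*n := st_interleave_le α β hα (hβ.trans hmn)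
  have h1 : gMap (α, β) = ((List.range (2*n)).map (interleave α β).1).reduceOption :=
    forget_eq _ hst
  have h2 : 2*n = 2*m + 2*(n-m) := by omega
  rw [h1, h2, List.range_add, List.map_append, List.reduceOption_append, List.map_map]
  congr 1
  have h3 : ((List.range (2*(n-m))).map ((interleave α β).1 ∘ (fun x => 2*m + x))).reduceOption
      = ((List.range (2*(n-m))).map (fun j => (interleave α β).1 (2*m + j))).reduceOption := rfl
  rw [h3, inter_slice1 α β hβ (n-m)]

theorem gMap_eq2 {A B : Type} (α : PSeq A) (β : PSeq B) {m n : ℕ}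
    (hα : α.st ≤ m) (hβ : β.st ≤ n) (hmn : m ≤ n) :
    gMap (α, β) = ((List.range (2*m)).map (interleave α β).1).reduceOption
      ++ (((List.range (n - m)).map (fun j => β.1 (m + j))).reduceOption).map Sum.inr := by
  have hst : (interleave α β).st ≤ 2*n := st_interleave_le α β (hα.trans hmn) hβ
  have h1 : gMap (α, β) = ((List.range (2*n)).map (interleave α β).1).reduceOption :=
    forget_eq _ hst
  have h2 : 2*n = 2*m + 2*(n-m) := by omega
  rw [h1, h2, List.range_add, List.map_append, List.reduceOption_append, List.map_map]
  congr 1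
  exact inter_slice2 α β hα (n-m)

theorem interleave_agree1 {A B : Type} {α' α : PSeq A} (β : PSeq B) {k : ℕ}
    (h : ∀ j, j < k → α'.1 j = α.1 j) :
    ∀ j, j < 2*k → (interleave α' β).1 j = (interleave α β).1 j := by
  intro j hj
  rcases Nat.even_or_odd j with ⟨r, hr⟩ | ⟨r, hr⟩
  · have : j = 2*r := by omega
    subst this
    rw [interleave_apply_even, interleave_apply_even, h r (by omega)]
  · have : j = 2*r+1 := by omega
    subst this
    rw [interleave_apply_odd, interleave_apply_odd]

theorem interleave_agree2 {A B : Type} (α : PSeq A) {β' β : PSeq B} {k : ℕ}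
    (h : ∀ j, j < k → β'.1 j = β.1 j) :
    ∀ j, j < 2*k → (interleave α β').1 j = (interleave α β).1 j := by
  intro j hj
  rcases Nat.even_or_odd j with ⟨r, hr⟩ | ⟨r, hr⟩
  · have : j = 2*r := by omega
    subst this
    rw [interleave_apply_even, interleave_apply_even]
  · have : j = 2*r+1 := by omega
    subst this
    rw [interleave_apply_odd, interleave_apply_odd, h r (by omega)]

theorem gMap_prefix {A B : Type} {α' α : PSeq A} {β : PSeq B} {k : ℕ}
    (hagree : ∀ j, j < k → α'.1 j = α.1 j) (hαk : α.st ≤ k) (hβk : β.st ≤ k) :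
    ((List.range (2*k)).map (interleave α' β).1).reduceOption = gMap (α, β) := by
  have h1 : ((List.range (2*k)).map (interleave α' β).1)
      = ((List.range (2*k)).map (interleave α β).1) := by
    apply List.map_congr_left
    intro j hj
    exact interleave_agree1 β hagree j (List.mem_range.1 hj)
  rw [h1]
  have h2 := gMap_eq1 α β (m := k) (n := k) hβk hαk le_rfl
  simp at h2
  rw [h2]

theorem gMap_prefix2 {A B : Type} {α : PSeq A} {β' β : PSeq B} {k : ℕ}
    (hagree : ∀ j, j < k → β'.1 j = β.1 j) (hαk : α.st ≤ k) (hβk : β.st ≤ k) :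
    ((List.range (2*k)).map (interleave α β').1).reduceOption = gMap (α, β) := by
  have h1 : ((List.range (2*k)).map (interleave α β').1)
      = ((List.range (2*k)).map (interleave α β).1) := by
    apply List.map_congr_left
    intro j hj
    exact interleave_agree2 α hagree j (List.mem_range.1 hj)
  rw [h1]
  have h2 := gMap_eq2 α β (m := k) (n := k) hαk hβk le_rfl
  simp at h2
  rw [h2]

/-- forward inclusion: close points map to successors -/
theorem gMap_cyl_succ1 {α' α β : P} {k : ℕ} (hk1 : α.st ≤ k) (hk2 : β.st ≤ k)
    (h : α' ∈ cylSet k α) :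
    ∃ u : List ℕ, gMap (α', β) = gMap (α, β) ++ u.map Sum.inl := by
  have h1 := gMap_eq1 α' β (m := k) (n := max k α'.st) hk2 (le_max_right _ _) (le_max_left _ _)
  rw [gMap_prefix h hk1 hk2] at h1
  exact ⟨_, h1⟩

theorem gMap_cyl_succ2 {β' α β : P} {k : ℕ} (hk1 : α.st ≤ k) (hk2 : β.st ≤ k)
    (h : β' ∈ cylSet k β) :
    ∃ u : List ℕ, gMap (α, β') = gMap (α, β) ++ u.map Sum.inr := by
  have h1 := gMap_eq2 α β' (m := k) (n := max k β'.st) hk1 (le_max_right _ _) (le_max_left _ _)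
  rw [gMap_prefix2 h hk1 hk2] at h1
  exact ⟨_, h1⟩

theorem reduce_range_getElem (u : List ℕ) :
    ((List.range u.length).map (fun j => u[j]?)).reduceOption = u := by
  have h1 : (List.range u.length).map (fun j => u[j]?) = u.map some := by
    apply List.ext_getElem
    · simp
    · intro i h1 h2
      simp at h1 ⊢
  rw [h1]
  induction u with
  | nil => rfl
  | cons a u ih => simp [List.reduceOption, *]

/-- realizing any prescribed successor within a cylinder -/
theorem gMap_cyl_realize1 (α β : P) (k : ℕ) (u : List ℕ) :
    ∃ α' ∈ cylSet k α, gMap (α', β) = gMap (α, β) ++ u.map Sum.inl := by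
  set m := max k (max α.st β.st) with hm
  set α' : P := ⟨fun j => if j < m then α.1 j else u[(j - m)]?,
    ⟨m + u.length, fun j hj => by
      show (if j < m then α.1 j else u[(j - m)]?) = none
      rw [if_neg (by omega)]
      exact List.getElem?_eq_none (by omega)⟩⟩ with hα'
  have hcyl : α' ∈ cylSet k α := by
    intro j hj
    show (if j < m then α.1 j else _) = α.1 j
    rw [if_pos (by omega)]
  have hst : α'.st ≤ m + u.length := st_le _ (fun j hj => by
    show (if j < m then α.1 j else _) = none
    rw [if_neg (by omega)]
    exact List.getElem?_eq_none (by omega))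
  refine ⟨α', hcyl, ?_⟩
  have h1 := gMap_eq1 α' β (m := m) (n := m + u.length)
    (le_trans (le_max_right _ _) (le_max_right _ _)) hst (by omega)
  have hagree : ∀ j, j < m → α'.1 j = α.1 j := by
    intro j hj
    show (if j < m then α.1 j else _) = α.1 j
    rw [if_pos hj]
  rw [gMap_prefix hagree (le_trans (le_max_left _ _) (le_max_right _ _))
    (le_trans (le_max_right _ _) (le_max_right _ _))] at h1
  have h2 : ∀ j, α'.1 (m + j) = u[j]? := by
    intro j
    show (if m + j < m then α.1 (m+j) else u[(m + j - m)]?) = u[j]?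
    rw [if_neg (by omega)]
    congr 1
    omega
  have h3 : ((List.range (m + u.length - m)).map (fun j => α'.1 (m + j))).reduceOption = u := by
    have h4 : m + u.length - m = u.length := by omega
    rw [h4]
    have h5 : (List.range u.length).map (fun j => α'.1 (m + j))
        = (List.range u.length).map (fun j => u[j]?) := by
      apply List.map_congr_left
      intro j hj
      exact h2 j
    rw [h5, reduce_range_getElem]
  rw [h3] at h1
  exact h1

theorem gMap_cyl_realize2 (α β : P) (k : ℕ) (u : List ℕ) :
    ∃ β' ∈ cylSet k β, gMap (α, β') = gMap (α, β) ++ u.map Sum.inr := by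
  set m := max k (max α.st β.st) with hm
  set β' : P := ⟨fun j => if j < m then β.1 j else u[(j - m)]?,
    ⟨m + u.length, fun j hj => by
      show (if j < m then β.1 j else u[(j - m)]?) = none
      rw [if_neg (by omega)]
      exact List.getElem?_eq_none (by omega)⟩⟩ with hβ'
  have hcyl : β' ∈ cylSet k β := by
    intro j hj
    show (if j < m then β.1 j else _) = β.1 j
    rw [if_pos (by omega)]
  have hst : β'.st ≤ m + u.length := st_le _ (fun j hj => by
    show (if j < m then β.1 j else _) = none
    rw [if_neg (by omega)]
    exact List.getElem?_eq_none (by omega))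
  refine ⟨β', hcyl, ?_⟩
  have h1 := gMap_eq2 α β' (m := m) (n := m + u.length)
    (le_trans (le_max_left _ _) (le_max_right _ _)) hst (by omega)
  have hagree : ∀ j, j < m → β'.1 j = β.1 j := by
    intro j hj
    show (if j < m then β.1 j else _) = β.1 j
    rw [if_pos hj]
  rw [gMap_prefix2 hagree (le_trans (le_max_left _ _) (le_max_right _ _))
    (le_trans (le_max_right _ _) (le_max_right _ _))] at h1
  have h2 : ∀ j, β'.1 (m + j) = u[j]? := by
    intro j
    show (if m + j < m then β.1 (m+j) else u[(m + j - m)]?) = u[j]?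
    rw [if_neg (by omega)]
    congr 1
    omega
  have h3 : ((List.range (m + u.length - m)).map (fun j => β'.1 (m + j))).reduceOption = u := by
    have h4 : m + u.length - m = u.length := by omega
    rw [h4]
    have h5 : (List.range u.length).map (fun j => β'.1 (m + j))
        = (List.range u.length).map (fun j => u[j]?) := by
      apply List.map_congr_left
      intro j hj
      exact h2 j
    rw [h5, reduce_range_getElem]
  rw [h3] at h1
  exact h1

/-- KEY: the two filter identities -/
theorem map_gMap_cylF1 (α β : P) :
    Filter.map (fun α' => gMap (α', β)) (cylF α)
      = Filter.principal {w | TreeSec.R1 (gMap (α, β)) w} := by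
  apply le_antisymm
  · rw [Filter.le_principal_iff, Filter.mem_map, mem_cylF]
    refine ⟨max α.st β.st, ?_⟩
    intro α' hα'
    obtain ⟨u, hu⟩ := gMap_cyl_succ1 (le_max_left _ _) (le_max_right _ _) hα'
    exact ⟨u, hu⟩
  · rw [Filter.le_def]
    intro s hs
    rw [Filter.mem_map, mem_cylF] at hs
    obtain ⟨k, hk⟩ := hs
    rw [Filter.mem_principal]
    rintro w ⟨u, rfl⟩
    obtain ⟨α', hα', heq⟩ := gMap_cyl_realize1 α β k u
    have := hk hα'
    rw [Set.mem_preimage, heq] at this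
    exact this

theorem map_gMap_cylF2 (α β : P) :
    Filter.map (fun β' => gMap (α, β')) (cylF β)
      = Filter.principal {w | TreeSec.R2 (gMap (α, β)) w} := by
  apply le_antisymm
  · rw [Filter.le_principal_iff, Filter.mem_map, mem_cylF]
    refine ⟨max α.st β.st, ?_⟩
    intro β' hβ'
    obtain ⟨u, hu⟩ := gMap_cyl_succ2 (le_max_left _ _) (le_max_right _ _) hβ'
    exact ⟨u, hu⟩
  · rw [Filter.le_def]
    intro s hs
    rw [Filter.mem_map, mem_cylF] at hs
    obtain ⟨k, hk⟩ := hs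
    rw [Filter.mem_principal]
    rintro w ⟨u, rfl⟩
    obtain ⟨β', hβ', heq⟩ := gMap_cyl_realize2 α β k u
    have := hk hβ'
    rw [Set.mem_preimage, heq] at this
    exact this

end PartSix

----------------------------------------------------------------
-- Part 7 : assembly
----------------------------------------------------------------

namespace PartSeven
open PartFive PartSix

theorem nSat_morphism {X Y : Type} (τ : Fin 2 → X → Filter X) (σ : Fin 2 → Y → Filter Y)
    (f : X → Y) (hf : ∀ (i : Fin 2) (x : X), σ i (f x) = Filter.map f (τ i x)) (V : ℕ → Set Y) :
    ∀ (φ : MFormula 2) (x : X), nSat τ (fun p => f ⁻¹' (V p)) x φ ↔ nSat σ V (f x) φ := by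
  intro φ
  induction φ with
  | prop p => intro x; exact Iff.rfl
  | bot => intro x; exact Iff.rfl
  | imp φ ψ ihφ ihψ => intro x; simp only [nSat, ihφ, ihψ]
  | box i φ ih =>
      intro x
      simp only [nSat, hf i x, Filter.mem_map]
      have h : f ⁻¹' {y | nSat σ V y φ} = {x' | nSat τ (fun p => f ⁻¹' (V p)) x' φ} := by
        ext x'
        exact (ih x').symm
      rw [h]

def zeroP : P := ⟨fun _ => none, 0, fun _ _ => rfl⟩

theorem zeroP_st : zeroP.st = 0 := Nat.le_zero.1 (st_le _ (fun _ _ => rfl))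

theorem gMap_zero : gMap (zeroP, zeroP) = [] := by
  have h := gMap_eq1 zeroP zeroP (m := 0) (n := 0)
    (zeroP_st ▸ le_rfl) (zeroP_st ▸ le_rfl) le_rfl
  simpa using h

noncomputable def fQ (p : ℚ × ℚ) : List (ℕ ⊕ ℕ) := gMap (hIso p.1, hIso p.2)

theorem hf1 (p : ℚ × ℚ) :
    TreeSec.τT 0 (fQ p) = Filter.map fQ (prodTau1 (fun x : ℚ => nhds x) p) := by
  have h1 : TreeSec.τT 0 (fQ p) = Filter.principal {y | TreeSec.R1 (fQ p) y} := by
    simp [TreeSec.τT]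
  rw [h1, show fQ p = gMap (hIso p.1, hIso p.2) from rfl,
    ← map_gMap_cylF1 (hIso p.1) (hIso p.2), ← map_hIso_nhds p.1]
  rw [prodTau1, Filter.map_map, Filter.map_map]
  rfl

theorem hf2 (p : ℚ × ℚ) :
    TreeSec.τT 1 (fQ p) = Filter.map fQ (prodTau2 (fun x : ℚ => nhds x) p) := by
  have h1 : TreeSec.τT 1 (fQ p) = Filter.principal {y | TreeSec.R2 (fQ p) y} := by
    simp [TreeSec.τT]
  rw [h1, show fQ p = gMap (hIso p.1, hIso p.2) from rfl,
    ← map_gMap_cylF2 (hIso p.1) (hIso p.2), ← map_hIso_nhds p.2]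
  rw [prodTau2, Filter.map_map, Filter.map_map]
  rfl

theorem hfQ : ∀ (i : Fin 2) (p : ℚ × ℚ),
    TreeSec.τT i (fQ p)
      = Filter.map fQ (![prodTau1 (fun x : ℚ => nhds x),
          prodTau2 (fun x : ℚ => nhds x)] i p) := by
  intro i p
  have h01 : i = 0 ∨ i = 1 := by revert i; decide
  rcases h01 with rfl | rfl
  · simpa using hf1 p
  · simpa using hf2 p

theorem main_result :
    NLog2 (prodTau1 (fun x : ℚ => nhds x)) (prodTau2 (fun x : ℚ => nhds x))
      = Fusion LogicS4 LogicS4 := by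
  apply Set.Subset.antisymm
  · intro φ hφ
    by_contra hmem
    obtain ⟨Γ₀, href⟩ := TreeSec.refutation hmem
    have hmor := nSat_morphism
      ![prodTau1 (fun x : ℚ => nhds x), prodTau2 (fun x : ℚ => nhds x)]
      TreeSec.τT fQ hfQ
      (fun p => {x | MFormula.prop p ∈ (TreeSec.label Γ₀ x).1}) φ
      (hIso.symm zeroP, hIso.symm zeroP)
    have hfx : fQ (hIso.symm zeroP, hIso.symm zeroP) = [] := by
      show gMap (hIso (hIso.symm zeroP), hIso (hIso.symm zeroP)) = []
      rw [OrderIso.apply_symm_apply, gMap_zero]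
    rw [hfx] at hmor
    exact href (hmor.1 (hφ _ _))
  · exact fusion_subset_NLog2_rat

end PartSeven

/-- For `𝔛 = (ℚ, τ)` with `τ(x)` the neighborhood filter of `x` in the
standard topology on `ℚ`: `Log(𝔛 × 𝔛) = S4 ⊗ S4`. -/
theorem log_rat_prod_eq_S4_fusion :
    NLog2 (prodTau1 (fun x : ℚ => nhds x)) (prodTau2 (fun x : ℚ => nhds x))
      = Fusion LogicS4 LogicS4 := PartSeven.main_result
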